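/- If X : ℝ → L⁰(Ω; E) is θ-almost periodic, then X is almost periodic in finite-dimensional distribution: for every finite sequence (t₁, …, t_n) of reals, the map t ↦ Law(X(t₁+t, θ_{−t}·), …, X(t_n+t, θ_{−t}·)) from ℝ to the space of Borel probability measures on Eⁿ (with the Wasserstein-type metric associated to the truncated max metric) is Bohr almost periodic. Moreover, if τ is a θ-ε-almost period of X, then τ is an (nε)-almost period of this law-valued map. -/
import Mathlib


open MeasureTheory Set Filter Topology

noncomputable section

def RelativelyDense (A : Set ℝ) : Prop :=
  ∃ l > 0, ∀ t : ℝ, ∃ a ∈ A, a ∈ Set.Icc t (t + l)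

variable {Ω : Type*} [MeasurableSpace Ω] {E : Type*} [MetricSpace E]

/-- The metric of convergence in probability on random variables. -/
def d0 (P : Measure Ω) (Y Z : Ω → E) : ℝ :=
  ∫ ω, min (dist (Y ω) (Z ω)) 1 ∂P

/-- `τ` is a `θ`-`ε`-almost period of the process `X`. -/
def IsThetaAlmostPeriod (P : Measure Ω) (θ : ℝ → Ω → Ω) (X : ℝ → Ω → E)
    (ε τ : ℝ) : Prop :=
  ∀ t : ℝ, d0 P (fun ω => X (t + τ) (θ (-τ) ω)) (X t) ≤ ε

/-- `θ`-almost periodicity (in probability): joint continuity in probability of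
`(t,s) ↦ X (t+s, θ₋ₛ ·)` and relative density of the set of `θ`-`ε`-almost
periods for every `ε > 0`. -/
def ThetaAlmostPeriodic (P : Measure Ω) (θ : ℝ → Ω → Ω) (X : ℝ → Ω → E) : Prop :=
  (∀ t s : ℝ, ∀ ε > 0, ∃ δ > 0, ∀ t' s' : ℝ, |t' - t| < δ → |s' - s| < δ →
      d0 P (fun ω => X (t' + s') (θ (-s') ω)) (fun ω => X (t + s) (θ (-s) ω)) ≤ ε) ∧
  (∀ ε > 0, RelativelyDense {τ : ℝ | IsThetaAlmostPeriod P θ X ε τ})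

/-- Wasserstein-type distance associated with the truncated metric, defined via
couplings. -/
def Wtrunc {S : Type*} [MetricSpace S] [MeasurableSpace S]
    (μ ν : Measure S) : ℝ :=
  sInf {r : ℝ | ∃ γ : Measure (S × S), IsProbabilityMeasure γ ∧
    γ.map Prod.fst = μ ∧ γ.map Prod.snd = ν ∧
    r = ∫ q, min (dist q.1 q.2) 1 ∂γ}

section Aux

variable {n : ℕ}

lemma min_dist_pi_le_sum (f g : Fin n → E) :
    min (dist f g) 1 ≤ ∑ i, min (dist (f i) (g i)) 1 := by
  rcases isEmpty_or_nonempty (Fin n) with he | hne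
  · have hfg : f = g := funext fun i => (he.false i).elim
    simp [hfg]
  · obtain ⟨i, -, hi⟩ := Finset.exists_mem_eq_sup Finset.univ
      ⟨hne.some, Finset.mem_univ _⟩ (fun i => nndist (f i) (g i))
    have hdist : dist f g = dist (f i) (g i) := by
      rw [dist_pi_def, hi]; rfl
    rw [hdist]
    exact Finset.single_le_sum
      (f := fun j => min (dist (f j) (g j)) 1)
      (fun j _ => le_min dist_nonneg zero_le_one) (Finset.mem_univ i)

lemma integrable_min_dist {S : Type*} [MetricSpace S] [MeasurableSpace S]
    [BorelSpace S] [SecondCountableTopology S]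
    (P : Measure Ω) [IsProbabilityMeasure P] {Y Z : Ω → S}
    (hY : Measurable Y) (hZ : Measurable Z) :
    Integrable (fun ω => min (dist (Y ω) (Z ω)) 1) P := by
  refine Integrable.mono' (integrable_const (1 : ℝ))
    ((hY.dist hZ).min measurable_const).aestronglyMeasurable ?_
  filter_upwards with ω
  rw [Real.norm_eq_abs, abs_of_nonneg (le_min dist_nonneg zero_le_one)]
  exact min_le_right _ _

lemma Wtrunc_le_integral {S : Type*} [MetricSpace S] [MeasurableSpace S]
    [BorelSpace S] [SecondCountableTopology S]
    (P : Measure Ω) [IsProbabilityMeasure P] (Y Z : Ω → S)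
    (hY : Measurable Y) (hZ : Measurable Z) :
    Wtrunc (P.map Y) (P.map Z) ≤ ∫ ω, min (dist (Y ω) (Z ω)) 1 ∂P := by
  have hYZ : Measurable (fun ω => (Y ω, Z ω)) := hY.prodMk hZ
  apply csInf_le
  · refine ⟨0, fun r hr => ?_⟩
    obtain ⟨γ, hγ, -, -, rfl⟩ := hr
    exact integral_nonneg fun q => le_min dist_nonneg zero_le_one
  · refine ⟨P.map (fun ω => (Y ω, Z ω)), ?_, ?_, ?_, ?_⟩
    · exact Measure.isProbabilityMeasure_map hYZ.aemeasurable
    · rw [Measure.map_map measurable_fst hYZ]; rfl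
    · rw [Measure.map_map measurable_snd hYZ]; rfl
    · rw [integral_map hYZ.aemeasurable
        ((continuous_dist.min continuous_const).aestronglyMeasurable)]

lemma exists_pos_le_all (δ : Fin n → ℝ) (h : ∀ i, 0 < δ i) :
    ∃ d > 0, ∀ i, d ≤ δ i := by
  rcases isEmpty_or_nonempty (Fin n) with he | hne
  · exact ⟨1, one_pos, fun i => (he.false i).elim⟩
  · obtain ⟨i₀, -, hmin⟩ := Finset.exists_min_image Finset.univ δ
      ⟨hne.some, Finset.mem_univ _⟩
    exact ⟨δ i₀, h i₀, fun i => hmin i (Finset.mem_univ i)⟩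

lemma relativelyDense_mono {A B : Set ℝ} (h : A ⊆ B) (hA : RelativelyDense A) :
    RelativelyDense B := by
  obtain ⟨l, hl, hA⟩ := hA
  refine ⟨l, hl, fun t => ?_⟩
  obtain ⟨a, ha, hat⟩ := hA t
  exact ⟨a, h ha, hat⟩

end Aux

/-- A `θ`-almost periodic process is almost periodic in finite-dimensional
distribution; moreover every `θ`-`ε`-almost period of `X` is an `(n·ε)`-almost
period of the finite-dimensional-law map. -/
theorem apfd_of_thetaAlmostPeriodic
    [PolishSpace E] [MeasurableSpace E] [BorelSpace E]
    (P : Measure Ω) [IsProbabilityMeasure P] (θ : ℝ → Ω → Ω)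
    (hmp : ∀ s : ℝ, MeasurePreserving (θ s) P P)
    (hθ0 : θ 0 = id) (hθadd : ∀ s t : ℝ, θ (s + t) = θ s ∘ θ t)
    (X : ℝ → Ω → E) (hXm : ∀ t : ℝ, Measurable (X t))
    (hθm : ∀ s : ℝ, Measurable (θ s))
    (hX : ThetaAlmostPeriodic P θ X)
    (n : ℕ) (ts : Fin n → ℝ)
    (μ : ℝ → Measure (Fin n → E))
    (hμ : μ = fun t => P.map (fun ω => fun i => X (ts i + t) (θ (-t) ω))) :
    ((∀ t : ℝ, ∀ ε > 0, ∃ δ > 0, ∀ t' : ℝ, |t' - t| < δ → Wtrunc (μ t') (μ t) ≤ ε) ∧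
      ∀ ε > 0, RelativelyDense {τ : ℝ | ∀ t : ℝ, Wtrunc (μ (t + τ)) (μ t) ≤ ε}) ∧
    (∀ ε > 0, ∀ τ : ℝ, IsThetaAlmostPeriod P θ X ε τ →
      ∀ t : ℝ, Wtrunc (μ (t + τ)) (μ t) ≤ n * ε) := by
  subst hμ
  have hYm : ∀ t : ℝ, Measurable (fun ω => fun i => X (ts i + t) (θ (-t) ω)) :=
    fun t => measurable_pi_lambda _ fun i => (hXm _).comp (hθm _)
  -- key estimate: Wtrunc of the laws is at most the sum of coordinatewise d0's
  have key : ∀ t' t : ℝ,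
      Wtrunc (P.map (fun ω => fun i => X (ts i + t') (θ (-t') ω)))
        (P.map (fun ω => fun i => X (ts i + t) (θ (-t) ω)))
      ≤ ∑ i, d0 P (fun ω => X (ts i + t') (θ (-t') ω))
          (fun ω => X (ts i + t) (θ (-t) ω)) := by
    intro t' t
    refine (Wtrunc_le_integral P _ _ (hYm t') (hYm t)).trans ?_
    have hint : ∀ i : Fin n, Integrable
        (fun ω => min (dist (X (ts i + t') (θ (-t') ω)) (X (ts i + t) (θ (-t) ω))) 1) P :=
      fun i => integrable_min_dist P ((hXm _).comp (hθm _)) ((hXm _).comp (hθm _))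
    calc ∫ ω, min (dist (fun i => X (ts i + t') (θ (-t') ω))
            (fun i => X (ts i + t) (θ (-t) ω))) 1 ∂P
        ≤ ∫ ω, ∑ i, min (dist (X (ts i + t') (θ (-t') ω)) (X (ts i + t) (θ (-t) ω))) 1 ∂P := by
          refine integral_mono (integrable_min_dist P (hYm t') (hYm t))
            (integrable_finset_sum _ fun i _ => hint i) (fun ω => ?_)
          exact min_dist_pi_le_sum _ _
      _ = ∑ i, ∫ ω, min (dist (X (ts i + t') (θ (-t') ω)) (X (ts i + t) (θ (-t) ω))) 1 ∂P :=
          integral_finset_sum _ fun i _ => hint i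
      _ = _ := rfl
  -- shift identity via measure preservation
  have shift : ∀ a t τ : ℝ,
      d0 P (fun ω => X (a + τ) (θ (-(t + τ)) ω)) (fun ω => X a (θ (-t) ω))
        = d0 P (fun ω => X (a + τ) (θ (-τ) ω)) (X a) := by
    intro a t τ
    have hc : ∀ ω, θ (-(t + τ)) ω = θ (-τ) (θ (-t) ω) := by
      intro ω
      have h1 : (-(t + τ)) = (-τ) + (-t) := by ring
      rw [h1, hθadd]; rfl
    have hf : AEStronglyMeasurable
        (fun ω' => min (dist (X (a + τ) (θ (-τ) ω')) (X a ω')) 1)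
        (P.map (θ (-t))) :=
      ((((hXm _).comp (hθm _)).dist (hXm _)).min measurable_const).aestronglyMeasurable
    calc ∫ ω, min (dist (X (a + τ) (θ (-(t + τ)) ω)) (X a (θ (-t) ω))) 1 ∂P
        = ∫ ω, (fun ω' => min (dist (X (a + τ) (θ (-τ) ω')) (X a ω')) 1) (θ (-t) ω) ∂P := by
          simp only [hc]
      _ = ∫ ω', min (dist (X (a + τ) (θ (-τ) ω')) (X a ω')) 1 ∂(P.map (θ (-t))) :=
          (integral_map (hθm (-t)).aemeasurable hf).symm
      _ = _ := by rw [(hmp (-t)).map_eq]; rfl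
  -- part 3: ε-almost periods give n·ε-almost periods of the laws
  have part3 : ∀ ε : ℝ, ∀ τ : ℝ, IsThetaAlmostPeriod P θ X ε τ →
      ∀ t : ℝ, Wtrunc (P.map (fun ω => fun i => X (ts i + (t + τ)) (θ (-(t + τ)) ω)))
        (P.map (fun ω => fun i => X (ts i + t) (θ (-t) ω))) ≤ n * ε := by
    intro ε τ hτ t
    refine (key (t + τ) t).trans ?_
    have hterm : ∀ i : Fin n,
        d0 P (fun ω => X (ts i + (t + τ)) (θ (-(t + τ)) ω))
          (fun ω => X (ts i + t) (θ (-t) ω)) ≤ ε := by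
      intro i
      have h1 : ts i + (t + τ) = (ts i + t) + τ := by ring
      rw [h1, shift (ts i + t) t τ]
      exact hτ (ts i + t)
    calc (∑ i, d0 P (fun ω => X (ts i + (t + τ)) (θ (-(t + τ)) ω))
            (fun ω => X (ts i + t) (θ (-t) ω)))
        ≤ ∑ _i : Fin n, ε := Finset.sum_le_sum fun i _ => hterm i
      _ = n * ε := by simp [mul_comm]
  refine ⟨⟨?_, ?_⟩, fun ε _ => part3 ε⟩
  · -- continuity in t
    intro t ε hε
    have hεn : (0 : ℝ) < ε / (n + 1) := by positivity
    have hδ : ∀ i : Fin n, ∃ δ > 0, ∀ t' : ℝ, |t' - t| < δ →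
        d0 P (fun ω => X (ts i + t') (θ (-t') ω))
          (fun ω => X (ts i + t) (θ (-t) ω)) ≤ ε / (n + 1) := by
      intro i
      obtain ⟨δ, hδpos, hδ⟩ := hX.1 (ts i) t (ε / (n + 1)) hεn
      exact ⟨δ, hδpos, fun t' ht' => hδ (ts i) t' (by simpa using hδpos) ht'⟩
    choose δ hδpos hδ using hδ
    obtain ⟨d, hd, hdle⟩ := exists_pos_le_all δ hδpos
    refine ⟨d, hd, fun t' ht' => ?_⟩
    refine (key t' t).trans ?_
    calc (∑ i, d0 P (fun ω => X (ts i + t') (θ (-t') ω))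
            (fun ω => X (ts i + t) (θ (-t) ω)))
        ≤ ∑ _i : Fin n, ε / (n + 1) :=
          Finset.sum_le_sum fun i _ => hδ i t' (lt_of_lt_of_le ht' (hdle i))
      _ = n * (ε / (n + 1)) := by simp [mul_comm]
      _ ≤ ε := by
          rw [mul_div_assoc' _ _ _]
          rw [div_le_iff₀ (by positivity)]
          nlinarith [hε.le]
  · -- relative density of almost periods
    intro ε hε
    have hεn : (0 : ℝ) < ε / (n + 1) := by positivity
    refine relativelyDense_mono ?_ (hX.2 (ε / (n + 1)) hεn)
    intro τ hτ t
    refine (part3 (ε / (n + 1)) τ hτ t).trans ?_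
    rw [mul_div_assoc' _ _ _]
    rw [div_le_iff₀ (by positivity)]
    nlinarith [hε.le]
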